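/- Let G and H be nontrivial connected graphs. Then the cycle convexity number of the lexicographic product G ∘ H equals the independence number of G ∘ H: C_cc(G ∘ H) = α(G ∘ H). -/

import Mathlib

open SimpleGraph

variable {V α β : Type*}

/-- A set `S` is cycle convex in `G` if no vertex outside `S` lies on a cycle in the
subgraph induced by `S ∪ {w}`. -/
def CycleConvex (G : SimpleGraph V) (S : Set V) : Prop :=
  ∀ w : V, w ∉ S →
    ∀ c : (G.induce (insert w S)).Walk ⟨w, Set.mem_insert w S⟩ ⟨w, Set.mem_insert w S⟩,
      ¬ c.IsCycle

/-- The cycle convex hull of `S`: the smallest cycle convex set containing `S`. -/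
def cycleHull (G : SimpleGraph V) (S : Set V) : Set V :=
  ⋂₀ {T : Set V | S ⊆ T ∧ CycleConvex G T}

/-- The cycle hull number: minimum size of a set whose cycle convex hull is everything. -/
noncomputable def cycleHullNumber (G : SimpleGraph V) : ℕ :=
  sInf {n : ℕ | ∃ S : Set V, S.ncard = n ∧ cycleHull G S = Set.univ}

/-- The cycle convexity number: maximum size of a proper cycle convex set. -/
noncomputable def cycleConvexityNumber (G : SimpleGraph V) : ℕ :=
  sSup {n : ℕ | ∃ S : Set V, S.ncard = n ∧ CycleConvex G S ∧ S ≠ Set.univ}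

/-- The independence number of a graph. -/
noncomputable def indepNumber (G : SimpleGraph V) : ℕ :=
  sSup {n : ℕ | ∃ S : Set V, S.ncard = n ∧ S.Pairwise fun a b => ¬ G.Adj a b}

/-- The strong product of two simple graphs. -/
def strongProd (G : SimpleGraph α) (H : SimpleGraph β) : SimpleGraph (α × β) where
  Adj x y := (G.Adj x.1 y.1 ∧ x.2 = y.2) ∨ (x.1 = y.1 ∧ H.Adj x.2 y.2) ∨
    (G.Adj x.1 y.1 ∧ H.Adj x.2 y.2)
  symm := ⟨fun x y h => by
    rcases h with ⟨h1, h2⟩ | ⟨h1, h2⟩ | ⟨h1, h2⟩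
    · exact Or.inl ⟨h1.symm, h2.symm⟩
    · exact Or.inr (Or.inl ⟨h1.symm, h2.symm⟩)
    · exact Or.inr (Or.inr ⟨h1.symm, h2.symm⟩)⟩
  loopless := ⟨fun x h => by
    rcases h with ⟨h1, _⟩ | ⟨_, h2⟩ | ⟨h1, _⟩
    · exact G.loopless.irrefl _ h1
    · exact H.loopless.irrefl _ h2
    · exact G.loopless.irrefl _ h1⟩

/-- The lexicographic product of two simple graphs. -/
def lexProd (G : SimpleGraph α) (H : SimpleGraph β) : SimpleGraph (α × β) where
  Adj x y := G.Adj x.1 y.1 ∨ (x.1 = y.1 ∧ H.Adj x.2 y.2)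
  symm := ⟨fun x y h => by
    rcases h with h1 | ⟨h1, h2⟩
    · exact Or.inl h1.symm
    · exact Or.inr ⟨h1.symm, h2.symm⟩⟩
  loopless := ⟨fun x h => by
    rcases h with h1 | ⟨_, h2⟩
    · exact G.loopless.irrefl _ h1
    · exact H.loopless.irrefl _ h2⟩

/-- If `S` is cycle convex and `w ∉ S` forms a triangle with two elements of `S`,
we get a contradiction; hence `w ∈ S`. -/
lemma triangle_mem {Γ : SimpleGraph V} {S : Set V} (hS : CycleConvex Γ S)
    {x y w : V} (hx : x ∈ S) (hy : y ∈ S)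
    (hwx : Γ.Adj w x) (hxy : Γ.Adj x y) (hyw : Γ.Adj y w) : w ∈ S := by
  by_contra hw
  have hxw : x ≠ w := fun h => hw (h ▸ hx)
  have hyww : y ≠ w := fun h => hw (h ▸ hy)
  set W : ↥(insert w S) := ⟨w, Set.mem_insert w S⟩ with hW
  set X : ↥(insert w S) := ⟨x, Set.mem_insert_of_mem w hx⟩ with hX
  set Y : ↥(insert w S) := ⟨y, Set.mem_insert_of_mem w hy⟩ with hY
  have aWX : (Γ.induce (insert w S)).Adj W X := by simpa using hwx
  have aXY : (Γ.induce (insert w S)).Adj X Y := by simpa using hxy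
  have aYW : (Γ.induce (insert w S)).Adj Y W := by simpa using hyw
  have dXY : X ≠ Y := fun h => hxy.ne (congrArg Subtype.val h)
  have dXW : X ≠ W := fun h => hxw (congrArg Subtype.val h)
  have dYW : Y ≠ W := fun h => hyww (congrArg Subtype.val h)
  refine hS w hw (Walk.cons aWX (Walk.cons aXY (Walk.cons aYW Walk.nil))) ?_
  rw [Walk.cons_isCycle_iff]
  constructor
  · rw [Walk.isPath_def]
    simp [List.nodup_cons, dXY, dXW, dYW]
  · simp [Sym2.eq_iff, dXY, dXW, dYW, dXY.symm, dXW.symm, dYW.symm]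
    exact fun h => dYW h.symm

/-- An independent set is cycle convex. -/
lemma indep_cycleConvex {Γ : SimpleGraph V} {S : Set V}
    (h : S.Pairwise fun a b => ¬ Γ.Adj a b) : CycleConvex Γ S := by
  intro w hw c hc
  have h3 := hc.three_le_length
  match c with
  | .nil => simp at h3
  | .cons _ .nil => simp at h3
  | .cons _ (.cons _ .nil) => simp at h3
  | .cons (v := x) ha (.cons (v := y) hb (.cons (v := z) hcc r)) =>
    obtain ⟨_, hnd⟩ := hc
    simp only [Walk.support_cons, List.tail_cons, List.nodup_cons] at hnd
    have hyW : y.val ≠ w := by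
      intro hyw
      have hmem : (⟨w, Set.mem_insert w S⟩ : ↥(insert w S)) ∈ r.support := r.end_mem_support
      have : y = (⟨w, Set.mem_insert w S⟩ : ↥(insert w S)) := Subtype.ext hyw
      exact hnd.2.1 (this ▸ hmem)
    have hxW : x.val ≠ w := fun hxw => ha.ne (Subtype.ext hxw.symm)
    have hxS : x.val ∈ S := x.2.resolve_left hxW
    have hyS : y.val ∈ S := y.2.resolve_left hyW
    have hadj : Γ.Adj x.val y.val := by simpa using hb
    exact h hxS hyS (fun he => hadj.ne he) hadj

section LexStuff

variable {α' β' : Type*} {G : SimpleGraph α'} {H : SimpleGraph β'} {S : Set (α' × β')}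

lemma exists_adj_ne (hG : G.Connected) (u v : α') (huv : u ≠ v) : ∃ b, G.Adj u b := by
  obtain ⟨p⟩ := hG.preconnected u v
  exact ⟨p.getVert 1, p.adj_snd (SimpleGraph.Walk.not_nil_of_ne huv)⟩

/-- Column fill: a `G`-edge inside `S` forces the whole column into `S` (along `H`-walks). -/
lemma col_full (hS : CycleConvex (lexProd G H) S)
    {g1 g2 : α'} {h2 : β'} (h12 : G.Adj g1 g2) (m2 : (g2, h2) ∈ S) :
    ∀ {a b : β'}, H.Walk a b → (g1, a) ∈ S → (g1, b) ∈ S := by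
  intro a b p
  induction p with
  | nil => exact id
  | cons hadj q ih =>
    intro ha
    exact ih (triangle_mem hS ha m2 (Or.inr ⟨rfl, hadj.symm⟩) (Or.inl h12) (Or.inl h12.symm))

/-- A full column spreads to everything along `G`-walks, given an `H`-edge. -/
lemma spread (hS : CycleConvex (lexProd G H) S) {e1 e2 : β'} (he : H.Adj e1 e2) :
    ∀ {a b : α'}, G.Walk a b → (∀ h, (a, h) ∈ S) → ∀ h, (b, h) ∈ S := by
  intro a b p
  induction p with
  | nil => exact id
  | cons hadj q ih =>
    intro ha
    refine ih fun h => ?_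
    exact triangle_mem hS (ha e1) (ha e2) (Or.inl hadj.symm) (Or.inr ⟨rfl, he⟩) (Or.inl hadj)

/-- A cycle convex set of the lexicographic product containing an edge is everything. -/
lemma cc_edge_univ [Nontrivial α'] [Nontrivial β'] (hG : G.Connected) (hH : H.Connected)
    (hS : CycleConvex (lexProd G H) S) {x y : α' × β'} (hx : x ∈ S) (hy : y ∈ S)
    (hxy : (lexProd G H).Adj x y) : S = Set.univ := by
  obtain ⟨e1, e2, he⟩ : ∃ e1 e2, H.Adj e1 e2 := by
    obtain ⟨u, v, huv⟩ := exists_pair_ne β'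
    obtain ⟨b, hb⟩ := exists_adj_ne hH u v huv
    exact ⟨u, b, hb⟩
  obtain ⟨g0, hcol⟩ : ∃ g0, ∀ h, (g0, h) ∈ S := by
    rcases hxy with hGe | ⟨heq, hHe⟩
    · refine ⟨x.1, fun h => ?_⟩
      obtain ⟨p⟩ := hH.preconnected x.2 h
      exact col_full hS hGe hy p hx
    · obtain ⟨g', hg'⟩ : ∃ g', G.Adj x.1 g' := by
        obtain ⟨u, hu⟩ := exists_ne x.1
        exact exists_adj_ne hG x.1 u (Ne.symm hu)
      refine ⟨g', fun h => ?_⟩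
      exact triangle_mem hS hx hy (Or.inl hg'.symm)
        (Or.inr ⟨heq, hHe⟩) (Or.inl (heq ▸ hg'))
  ext z
  simp only [Set.mem_univ, iff_true]
  obtain ⟨p⟩ := hG.preconnected g0 z.1
  exact spread hS he p hcol z.2

end LexStuff

theorem stmt_15 [Fintype α] [Fintype β] (G : SimpleGraph α) (H : SimpleGraph β)
    [Nontrivial α] [Nontrivial β] (hG : G.Connected) (hH : H.Connected) :
    cycleConvexityNumber (lexProd G H) = indepNumber (lexProd G H) := by
  have hedge : ∃ x y : α × β, (lexProd G H).Adj x y := by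
    obtain ⟨u, v, huv⟩ := exists_pair_ne α
    obtain ⟨b, hb⟩ := exists_adj_ne hG u v huv
    obtain ⟨e⟩ := (inferInstance : Nonempty β)
    exact ⟨(u, e), (b, e), Or.inl hb⟩
  unfold cycleConvexityNumber indepNumber
  congr 1
  ext n
  constructor
  · rintro ⟨S, hcard, hcc, hne⟩
    refine ⟨S, hcard, ?_⟩
    intro a ha b hb hab hadj
    exact hne (cc_edge_univ hG hH hcc ha hb hadj)
  · rintro ⟨S, hcard, hind⟩
    refine ⟨S, hcard, indep_cycleConvex hind, ?_⟩
    rintro rfl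
    obtain ⟨x, y, hxy⟩ := hedge
    exact hind (Set.mem_univ x) (Set.mem_univ y) hxy.ne hxy
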